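/- Let W = exp(-iπ I_y S_y)·exp(-i(π/2) I_z) ∈ SU(4), where I_α = σ_α⊗1, S_β = 1⊗σ_β. Then conjugation by W maps the subalgebra 𝔨 = span{-iI_α, -iS_β} onto so(4) (real skew-symmetric 4×4 matrices) and maps 𝔭 = span{-iI_αS_β} onto the set of matrices -iA with A traceless real symmetric. -/

import Mathlib

open Matrix Kronecker

set_option maxHeartbeats 1600000

noncomputable def pauli : Fin 3 → Matrix (Fin 2) (Fin 2) ℂ
  | 0 => (1 / 2 : ℂ) • !![0, 1; 1, 0]
  | 1 => (1 / 2 : ℂ) • !![0, -Complex.I; Complex.I, 0]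
  | 2 => (1 / 2 : ℂ) • !![1, 0; 0, -1]

/-- `𝔨 = span{-i I_α, -i S_β}`. -/
noncomputable def localAlg : Submodule ℝ (Matrix (Fin 2 × Fin 2) (Fin 2 × Fin 2) ℂ) :=
  Submodule.span ℝ
    (Set.range (fun α : Fin 3 =>
        (-Complex.I) • (pauli α ⊗ₖ (1 : Matrix (Fin 2) (Fin 2) ℂ))) ∪
     Set.range (fun β : Fin 3 =>
        (-Complex.I) • ((1 : Matrix (Fin 2) (Fin 2) ℂ) ⊗ₖ pauli β)))

/-- `𝔭 = span{-i I_α S_β}`. -/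
noncomputable def nonlocalAlg : Submodule ℝ (Matrix (Fin 2 × Fin 2) (Fin 2 × Fin 2) ℂ) :=
  Submodule.span ℝ
    (Set.range (fun p : Fin 3 × Fin 3 => (-Complex.I) • (pauli p.1 ⊗ₖ pauli p.2)))

/-- `W = exp(-iπ I_y S_y) exp(-i(π/2) I_z)`. -/
noncomputable def Wmagic : Matrix (Fin 2 × Fin 2) (Fin 2 × Fin 2) ℂ :=
  NormedSpace.exp ((-(Real.pi : ℂ) * Complex.I) • (pauli 1 ⊗ₖ pauli 1)) *
    NormedSpace.exp ((-((Real.pi : ℂ) / 2) * Complex.I) •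
      (pauli 2 ⊗ₖ (1 : Matrix (Fin 2) (Fin 2) ℂ)))

section Aux

open Complex

abbrev M4C := Matrix (Fin 2 × Fin 2) (Fin 2 × Fin 2) ℂ
abbrev M4R := Matrix (Fin 2 × Fin 2) (Fin 2 × Fin 2) ℝ

def blk {α : Type*} (B : Matrix (Fin 2) (Fin 2) (Matrix (Fin 2) (Fin 2) α)) :
    Matrix (Fin 2 × Fin 2) (Fin 2 × Fin 2) α :=
  Matrix.of fun p q => B p.1 q.1 p.2 q.2

@[simp] lemma blk_apply {α : Type*} (B : Matrix (Fin 2) (Fin 2) (Matrix (Fin 2) (Fin 2) α))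
    (p q : Fin 2 × Fin 2) : blk B p q = B p.1 q.1 p.2 q.2 := rfl

/-! ### The explicit magic matrix and its inverse -/

noncomputable def Wm : M4C :=
  blk !![!![(1-I)/2, 0; 0, (1-I)/2], !![0, -((1-I)/2); (1-I)/2, 0];
         !![0, -((1+I)/2); (1+I)/2, 0], !![(1+I)/2, 0; 0, (1+I)/2]]

noncomputable def Wd : M4C :=
  blk !![!![(1+I)/2, 0; 0, (1+I)/2], !![0, (1-I)/2; -((1-I)/2), 0];
         !![0, (1+I)/2; -((1+I)/2), 0], !![(1-I)/2, 0; 0, (1-I)/2]]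

lemma WmWd : Wm * Wd = 1 := by
  ext ⟨p1, p2⟩ ⟨q1, q2⟩
  fin_cases p1 <;> fin_cases p2 <;> fin_cases q1 <;> fin_cases q2 <;>
    simp [Wm, Wd, Matrix.mul_apply, Fintype.sum_prod_type, Fin.sum_univ_two,
      Matrix.one_apply, Complex.ext_iff] <;> norm_num [Prod.ext_iff]

/-! ### Diagonalization data for the exponentials -/

noncomputable def Pm : M4C :=
  blk !![!![1,0;0,1], !![0,1;1,0]; !![0,1;-1,0], !![-1,0;0,1]]

noncomputable def Qm : M4C :=
  blk !![!![1/2,0;0,1/2], !![0,-(1/2);1/2,0]; !![0,1/2;1/2,0], !![-(1/2),0;0,1/2]]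

lemma PQ : Pm * Qm = 1 := by
  ext ⟨p1, p2⟩ ⟨q1, q2⟩
  fin_cases p1 <;> fin_cases p2 <;> fin_cases q1 <;> fin_cases q2 <;>
    simp [Pm, Qm, Matrix.mul_apply, Fintype.sum_prod_type, Fin.sum_univ_two,
      Matrix.one_apply, Complex.ext_iff] <;> norm_num [Prod.ext_iff]

lemma QP : Qm * Pm = 1 := by
  ext ⟨p1, p2⟩ ⟨q1, q2⟩
  fin_cases p1 <;> fin_cases p2 <;> fin_cases q1 <;> fin_cases q2 <;>
    simp [Pm, Qm, Matrix.mul_apply, Fintype.sum_prod_type, Fin.sum_univ_two,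
      Matrix.one_apply, Complex.ext_iff] <;> norm_num [Prod.ext_iff]

noncomputable def vd : Fin 2 × Fin 2 → ℂ := fun p =>
  if p.1 = 0 then -((Real.pi : ℂ)/4) * Complex.I else ((Real.pi : ℂ)/4) * Complex.I

lemma arg2_eq : ((-((Real.pi : ℂ)/2) * Complex.I) •
    (pauli 2 ⊗ₖ (1 : Matrix (Fin 2) (Fin 2) ℂ))) = Matrix.diagonal vd := by
  ext ⟨p1, p2⟩ ⟨q1, q2⟩
  fin_cases p1 <;> fin_cases p2 <;> fin_cases q1 <;> fin_cases q2 <;>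
    simp [pauli, vd, Matrix.diagonal, Matrix.one_apply, Prod.ext_iff] <;> ring

lemma arg1_eq : ((-(Real.pi : ℂ) * Complex.I) • (pauli 1 ⊗ₖ pauli 1))
    = Pm * Matrix.diagonal vd * Qm := by
  ext ⟨p1, p2⟩ ⟨q1, q2⟩
  fin_cases p1 <;> fin_cases p2 <;> fin_cases q1 <;> fin_cases q2 <;>
    simp [pauli, vd, Pm, Qm, Matrix.mul_apply, Matrix.diagonal, Fintype.sum_prod_type,
      Fin.sum_univ_two, Prod.ext_iff] <;>
    (first
      | ring1
      | linear_combination (-(Real.pi:ℂ) * Complex.I / 4) * Complex.I_sq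
      | linear_combination ((Real.pi:ℂ) * Complex.I / 4) * Complex.I_sq)

noncomputable def ed : Fin 2 × Fin 2 → ℂ := fun p =>
  if p.1 = 0 then ((Real.sqrt 2 / 2 : ℝ) : ℂ) * (1 - Complex.I)
  else ((Real.sqrt 2 / 2 : ℝ) : ℂ) * (1 + Complex.I)

lemma exp_vd : NormedSpace.exp vd = ed := by
  funext p
  rw [Pi.coe_exp]
  rcases p with ⟨p1, p2⟩
  fin_cases p1 <;> simp only [vd, ed] <;> norm_num <;>
    rw [← Complex.exp_eq_exp_ℂ]
  · rw [show -((Real.pi:ℂ)/4 * Complex.I) = ((-(Real.pi/4) : ℝ) : ℂ) * Complex.I by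
        push_cast; ring,
      Complex.exp_mul_I, ← Complex.ofReal_cos, ← Complex.ofReal_sin]
    rw [Real.cos_neg, Real.sin_neg, Real.cos_pi_div_four, Real.sin_pi_div_four]
    push_cast; ring
  · rw [show ((Real.pi:ℂ)/4 * Complex.I) = (((Real.pi/4) : ℝ) : ℂ) * Complex.I by
        push_cast; ring,
      Complex.exp_mul_I, ← Complex.ofReal_cos, ← Complex.ofReal_sin]
    rw [Real.cos_pi_div_four, Real.sin_pi_div_four]
    push_cast; ring

lemma prod_eq_Wm : Pm * Matrix.diagonal ed * Qm * Matrix.diagonal ed = Wm := by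
  have hs : Real.sqrt 2 ^ 2 = 2 := Real.sq_sqrt (by norm_num)
  ext ⟨p1, p2⟩ ⟨q1, q2⟩
  fin_cases p1 <;> fin_cases p2 <;> fin_cases q1 <;> fin_cases q2 <;>
    simp [Pm, Qm, Wm, ed, Matrix.mul_apply, Matrix.diagonal, Fintype.sum_prod_type,
      Fin.sum_univ_two, Prod.ext_iff, Complex.ext_iff] <;>
    (try ring_nf) <;> norm_num [hs]

lemma Wmagic_eq : Wmagic = Wm := by
  have hU : IsUnit Pm := ⟨⟨Pm, Qm, PQ, QP⟩, rfl⟩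
  have hQ : Pm⁻¹ = Qm := Matrix.inv_eq_right_inv PQ
  rw [Wmagic, arg1_eq, arg2_eq, ← hQ, Matrix.exp_conj Pm _ hU, hQ,
    Matrix.exp_diagonal, exp_vd]
  exact prod_eq_Wm

lemma Winv_eq : Wmagic⁻¹ = Wd := by
  rw [Wmagic_eq]; exact Matrix.inv_eq_right_inv WmWd

noncomputable def KIx : M4R :=
  blk !![!![0, 0; 0, 0], !![-(1/2), 0; 0, -(1/2)];
         !![1/2, 0; 0, 1/2], !![0, 0; 0, 0]]

lemma conj_Ix : Wm * ((-Complex.I) • (pauli 0 ⊗ₖ (1 : Matrix (Fin 2) (Fin 2) ℂ)))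
    = (KIx.map Complex.ofReal) * Wm := by
  ext ⟨p1, p2⟩ ⟨q1, q2⟩
  fin_cases p1 <;> fin_cases p2 <;> fin_cases q1 <;> fin_cases q2 <;>
    simp [Wm, KIx, pauli, Matrix.mul_apply, Fintype.sum_prod_type, Fin.sum_univ_two,
      Matrix.one_apply, Complex.ext_iff] <;> norm_num [Prod.ext_iff]

noncomputable def KIy : M4R :=
  blk !![!![0, -(1/2); 1/2, 0], !![0, 0; 0, 0];
         !![0, 0; 0, 0], !![0, 1/2; -(1/2), 0]]

lemma conj_Iy : Wm * ((-Complex.I) • (pauli 1 ⊗ₖ (1 : Matrix (Fin 2) (Fin 2) ℂ)))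
    = (KIy.map Complex.ofReal) * Wm := by
  ext ⟨p1, p2⟩ ⟨q1, q2⟩
  fin_cases p1 <;> fin_cases p2 <;> fin_cases q1 <;> fin_cases q2 <;>
    simp [Wm, KIy, pauli, Matrix.mul_apply, Fintype.sum_prod_type, Fin.sum_univ_two,
      Matrix.one_apply, Complex.ext_iff] <;> norm_num [Prod.ext_iff]

noncomputable def KIz : M4R :=
  blk !![!![0, 0; 0, 0], !![0, -(1/2); 1/2, 0];
         !![0, -(1/2); 1/2, 0], !![0, 0; 0, 0]]

lemma conj_Iz : Wm * ((-Complex.I) • (pauli 2 ⊗ₖ (1 : Matrix (Fin 2) (Fin 2) ℂ)))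
    = (KIz.map Complex.ofReal) * Wm := by
  ext ⟨p1, p2⟩ ⟨q1, q2⟩
  fin_cases p1 <;> fin_cases p2 <;> fin_cases q1 <;> fin_cases q2 <;>
    simp [Wm, KIz, pauli, Matrix.mul_apply, Fintype.sum_prod_type, Fin.sum_univ_two,
      Matrix.one_apply, Complex.ext_iff] <;> norm_num [Prod.ext_iff]

noncomputable def KSx : M4R :=
  blk !![!![0, 0; 0, 0], !![1/2, 0; 0, -(1/2)];
         !![-(1/2), 0; 0, 1/2], !![0, 0; 0, 0]]

lemma conj_Sx : Wm * ((-Complex.I) • ((1 : Matrix (Fin 2) (Fin 2) ℂ) ⊗ₖ pauli 0))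
    = (KSx.map Complex.ofReal) * Wm := by
  ext ⟨p1, p2⟩ ⟨q1, q2⟩
  fin_cases p1 <;> fin_cases p2 <;> fin_cases q1 <;> fin_cases q2 <;>
    simp [Wm, KSx, pauli, Matrix.mul_apply, Fintype.sum_prod_type, Fin.sum_univ_two,
      Matrix.one_apply, Complex.ext_iff] <;> norm_num [Prod.ext_iff]

noncomputable def KSy : M4R :=
  blk !![!![0, -(1/2); 1/2, 0], !![0, 0; 0, 0];
         !![0, 0; 0, 0], !![0, -(1/2); 1/2, 0]]

lemma conj_Sy : Wm * ((-Complex.I) • ((1 : Matrix (Fin 2) (Fin 2) ℂ) ⊗ₖ pauli 1))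
    = (KSy.map Complex.ofReal) * Wm := by
  ext ⟨p1, p2⟩ ⟨q1, q2⟩
  fin_cases p1 <;> fin_cases p2 <;> fin_cases q1 <;> fin_cases q2 <;>
    simp [Wm, KSy, pauli, Matrix.mul_apply, Fintype.sum_prod_type, Fin.sum_univ_two,
      Matrix.one_apply, Complex.ext_iff] <;> norm_num [Prod.ext_iff]

noncomputable def KSz : M4R :=
  blk !![!![0, 0; 0, 0], !![0, -(1/2); -(1/2), 0];
         !![0, 1/2; 1/2, 0], !![0, 0; 0, 0]]

lemma conj_Sz : Wm * ((-Complex.I) • ((1 : Matrix (Fin 2) (Fin 2) ℂ) ⊗ₖ pauli 2))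
    = (KSz.map Complex.ofReal) * Wm := by
  ext ⟨p1, p2⟩ ⟨q1, q2⟩
  fin_cases p1 <;> fin_cases p2 <;> fin_cases q1 <;> fin_cases q2 <;>
    simp [Wm, KSz, pauli, Matrix.mul_apply, Fintype.sum_prod_type, Fin.sum_univ_two,
      Matrix.one_apply, Complex.ext_iff] <;> norm_num [Prod.ext_iff]

noncomputable def KPxx : M4R :=
  blk !![!![-(1/4), 0; 0, 1/4], !![0, 0; 0, 0];
         !![0, 0; 0, 0], !![-(1/4), 0; 0, 1/4]]

lemma conj_Pxx : Wm * ((-Complex.I) • (pauli 0 ⊗ₖ pauli 0))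
    = ((-Complex.I) • (KPxx.map Complex.ofReal)) * Wm := by
  ext ⟨p1, p2⟩ ⟨q1, q2⟩
  fin_cases p1 <;> fin_cases p2 <;> fin_cases q1 <;> fin_cases q2 <;>
    simp [Wm, KPxx, pauli, Matrix.mul_apply, Fintype.sum_prod_type, Fin.sum_univ_two,
      Matrix.one_apply, Complex.ext_iff] <;> norm_num [Prod.ext_iff]

noncomputable def KPxy : M4R :=
  blk !![!![0, 0; 0, 0], !![0, -(1/4); 1/4, 0];
         !![0, 1/4; -(1/4), 0], !![0, 0; 0, 0]]

lemma conj_Pxy : Wm * ((-Complex.I) • (pauli 0 ⊗ₖ pauli 1))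
    = ((-Complex.I) • (KPxy.map Complex.ofReal)) * Wm := by
  ext ⟨p1, p2⟩ ⟨q1, q2⟩
  fin_cases p1 <;> fin_cases p2 <;> fin_cases q1 <;> fin_cases q2 <;>
    simp [Wm, KPxy, pauli, Matrix.mul_apply, Fintype.sum_prod_type, Fin.sum_univ_two,
      Matrix.one_apply, Complex.ext_iff] <;> norm_num [Prod.ext_iff]

noncomputable def KPxz : M4R :=
  blk !![!![0, 1/4; 1/4, 0], !![0, 0; 0, 0];
         !![0, 0; 0, 0], !![0, 1/4; 1/4, 0]]

lemma conj_Pxz : Wm * ((-Complex.I) • (pauli 0 ⊗ₖ pauli 2))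
    = ((-Complex.I) • (KPxz.map Complex.ofReal)) * Wm := by
  ext ⟨p1, p2⟩ ⟨q1, q2⟩
  fin_cases p1 <;> fin_cases p2 <;> fin_cases q1 <;> fin_cases q2 <;>
    simp [Wm, KPxz, pauli, Matrix.mul_apply, Fintype.sum_prod_type, Fin.sum_univ_two,
      Matrix.one_apply, Complex.ext_iff] <;> norm_num [Prod.ext_iff]

noncomputable def KPyx : M4R :=
  blk !![!![0, 0; 0, 0], !![0, -(1/4); -(1/4), 0];
         !![0, -(1/4); -(1/4), 0], !![0, 0; 0, 0]]

lemma conj_Pyx : Wm * ((-Complex.I) • (pauli 1 ⊗ₖ pauli 0))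
    = ((-Complex.I) • (KPyx.map Complex.ofReal)) * Wm := by
  ext ⟨p1, p2⟩ ⟨q1, q2⟩
  fin_cases p1 <;> fin_cases p2 <;> fin_cases q1 <;> fin_cases q2 <;>
    simp [Wm, KPyx, pauli, Matrix.mul_apply, Fintype.sum_prod_type, Fin.sum_univ_two,
      Matrix.one_apply, Complex.ext_iff] <;> norm_num [Prod.ext_iff]

noncomputable def KPyy : M4R :=
  blk !![!![1/4, 0; 0, 1/4], !![0, 0; 0, 0];
         !![0, 0; 0, 0], !![-(1/4), 0; 0, -(1/4)]]

lemma conj_Pyy : Wm * ((-Complex.I) • (pauli 1 ⊗ₖ pauli 1))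
    = ((-Complex.I) • (KPyy.map Complex.ofReal)) * Wm := by
  ext ⟨p1, p2⟩ ⟨q1, q2⟩
  fin_cases p1 <;> fin_cases p2 <;> fin_cases q1 <;> fin_cases q2 <;>
    simp [Wm, KPyy, pauli, Matrix.mul_apply, Fintype.sum_prod_type, Fin.sum_univ_two,
      Matrix.one_apply, Complex.ext_iff] <;> norm_num [Prod.ext_iff]

noncomputable def KPyz : M4R :=
  blk !![!![0, 0; 0, 0], !![-(1/4), 0; 0, 1/4];
         !![-(1/4), 0; 0, 1/4], !![0, 0; 0, 0]]

lemma conj_Pyz : Wm * ((-Complex.I) • (pauli 1 ⊗ₖ pauli 2))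
    = ((-Complex.I) • (KPyz.map Complex.ofReal)) * Wm := by
  ext ⟨p1, p2⟩ ⟨q1, q2⟩
  fin_cases p1 <;> fin_cases p2 <;> fin_cases q1 <;> fin_cases q2 <;>
    simp [Wm, KPyz, pauli, Matrix.mul_apply, Fintype.sum_prod_type, Fin.sum_univ_two,
      Matrix.one_apply, Complex.ext_iff] <;> norm_num [Prod.ext_iff]

noncomputable def KPzx : M4R :=
  blk !![!![0, 1/4; 1/4, 0], !![0, 0; 0, 0];
         !![0, 0; 0, 0], !![0, -(1/4); -(1/4), 0]]

lemma conj_Pzx : Wm * ((-Complex.I) • (pauli 2 ⊗ₖ pauli 0))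
    = ((-Complex.I) • (KPzx.map Complex.ofReal)) * Wm := by
  ext ⟨p1, p2⟩ ⟨q1, q2⟩
  fin_cases p1 <;> fin_cases p2 <;> fin_cases q1 <;> fin_cases q2 <;>
    simp [Wm, KPzx, pauli, Matrix.mul_apply, Fintype.sum_prod_type, Fin.sum_univ_two,
      Matrix.one_apply, Complex.ext_iff] <;> norm_num [Prod.ext_iff]

noncomputable def KPzy : M4R :=
  blk !![!![0, 0; 0, 0], !![1/4, 0; 0, 1/4];
         !![1/4, 0; 0, 1/4], !![0, 0; 0, 0]]

lemma conj_Pzy : Wm * ((-Complex.I) • (pauli 2 ⊗ₖ pauli 1))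
    = ((-Complex.I) • (KPzy.map Complex.ofReal)) * Wm := by
  ext ⟨p1, p2⟩ ⟨q1, q2⟩
  fin_cases p1 <;> fin_cases p2 <;> fin_cases q1 <;> fin_cases q2 <;>
    simp [Wm, KPzy, pauli, Matrix.mul_apply, Fintype.sum_prod_type, Fin.sum_univ_two,
      Matrix.one_apply, Complex.ext_iff] <;> norm_num [Prod.ext_iff]

noncomputable def KPzz : M4R :=
  blk !![!![1/4, 0; 0, -(1/4)], !![0, 0; 0, 0];
         !![0, 0; 0, 0], !![-(1/4), 0; 0, 1/4]]

lemma conj_Pzz : Wm * ((-Complex.I) • (pauli 2 ⊗ₖ pauli 2))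
    = ((-Complex.I) • (KPzz.map Complex.ofReal)) * Wm := by
  ext ⟨p1, p2⟩ ⟨q1, q2⟩
  fin_cases p1 <;> fin_cases p2 <;> fin_cases q1 <;> fin_cases q2 <;>
    simp [Wm, KPzz, pauli, Matrix.mul_apply, Fintype.sum_prod_type, Fin.sum_univ_two,
      Matrix.one_apply, Complex.ext_iff] <;> norm_num [Prod.ext_iff]

end Aux

section Aux2

open Complex

noncomputable def gI (α : Fin 3) : M4C :=
  (-Complex.I) • (pauli α ⊗ₖ (1 : Matrix (Fin 2) (Fin 2) ℂ))
noncomputable def gS (β : Fin 3) : M4C :=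
  (-Complex.I) • ((1 : Matrix (Fin 2) (Fin 2) ℂ) ⊗ₖ pauli β)
noncomputable def gP (p : Fin 3 × Fin 3) : M4C :=
  (-Complex.I) • (pauli p.1 ⊗ₖ pauli p.2)

noncomputable def mapRC : M4R →ₗ[ℝ] M4C where
  toFun A := A.map Complex.ofReal
  map_add' A B := by ext p q; simp [Matrix.map_apply]
  map_smul' r A := by ext p q; simp [Matrix.map_apply, Complex.real_smul]

noncomputable def mapRC2 : M4R →ₗ[ℝ] M4C where
  toFun A := (-Complex.I) • A.map Complex.ofReal
  map_add' A B := by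
    ext p q; simp [Matrix.map_apply]; ring
  map_smul' r A := by
    ext p q; simp [Matrix.map_apply, Complex.real_smul]; ring

noncomputable def AdW : M4C →ₗ[ℝ] M4C where
  toFun X := Wmagic * X * Wmagic⁻¹
  map_add' X Y := by rw [mul_add, add_mul]
  map_smul' r X := by rw [mul_smul_comm, smul_mul_assoc]; rfl

noncomputable def skewSub : Submodule ℝ M4R where
  carrier := {A | Aᵀ = -A}
  add_mem' := by
    intro a b ha hb
    simp only [Set.mem_setOf_eq, Matrix.transpose_add] at *
    rw [ha, hb, neg_add]
  zero_mem' := by simp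
  smul_mem' := by
    intro c a ha
    simp only [Set.mem_setOf_eq, Matrix.transpose_smul] at *
    rw [ha, smul_neg]

noncomputable def symSub : Submodule ℝ M4R where
  carrier := {A | Aᵀ = A ∧ Matrix.trace A = 0}
  add_mem' := by
    rintro a b ⟨ha1, ha2⟩ ⟨hb1, hb2⟩
    refine ⟨?_, ?_⟩
    · rw [Matrix.transpose_add, ha1, hb1]
    · rw [Matrix.trace_add, ha2, hb2, add_zero]
  zero_mem' := by simp
  smul_mem' := by
    rintro c a ⟨ha1, ha2⟩
    refine ⟨?_, ?_⟩
    · rw [Matrix.transpose_smul, ha1]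
    · rw [Matrix.trace_smul, ha2, smul_zero]

lemma AdW_Ix : AdW (gI 0) = mapRC KIx := by
  show Wmagic * _ * Wmagic⁻¹ = _
  rw [Winv_eq, Wmagic_eq, gI, conj_Ix, mul_assoc, WmWd, mul_one]; rfl
lemma AdW_Iy : AdW (gI 1) = mapRC KIy := by
  show Wmagic * _ * Wmagic⁻¹ = _
  rw [Winv_eq, Wmagic_eq, gI, conj_Iy, mul_assoc, WmWd, mul_one]; rfl
lemma AdW_Iz : AdW (gI 2) = mapRC KIz := by
  show Wmagic * _ * Wmagic⁻¹ = _
  rw [Winv_eq, Wmagic_eq, gI, conj_Iz, mul_assoc, WmWd, mul_one]; rfl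
lemma AdW_Sx : AdW (gS 0) = mapRC KSx := by
  show Wmagic * _ * Wmagic⁻¹ = _
  rw [Winv_eq, Wmagic_eq, gS, conj_Sx, mul_assoc, WmWd, mul_one]; rfl
lemma AdW_Sy : AdW (gS 1) = mapRC KSy := by
  show Wmagic * _ * Wmagic⁻¹ = _
  rw [Winv_eq, Wmagic_eq, gS, conj_Sy, mul_assoc, WmWd, mul_one]; rfl
lemma AdW_Sz : AdW (gS 2) = mapRC KSz := by
  show Wmagic * _ * Wmagic⁻¹ = _
  rw [Winv_eq, Wmagic_eq, gS, conj_Sz, mul_assoc, WmWd, mul_one]; rfl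
lemma AdW_Pxx : AdW (gP (0,0)) = mapRC2 KPxx := by
  show Wmagic * _ * Wmagic⁻¹ = _
  rw [Winv_eq, Wmagic_eq, gP, conj_Pxx, mul_assoc, WmWd, mul_one]; rfl
lemma AdW_Pxy : AdW (gP (0,1)) = mapRC2 KPxy := by
  show Wmagic * _ * Wmagic⁻¹ = _
  rw [Winv_eq, Wmagic_eq, gP, conj_Pxy, mul_assoc, WmWd, mul_one]; rfl
lemma AdW_Pxz : AdW (gP (0,2)) = mapRC2 KPxz := by
  show Wmagic * _ * Wmagic⁻¹ = _
  rw [Winv_eq, Wmagic_eq, gP, conj_Pxz, mul_assoc, WmWd, mul_one]; rfl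
lemma AdW_Pyx : AdW (gP (1,0)) = mapRC2 KPyx := by
  show Wmagic * _ * Wmagic⁻¹ = _
  rw [Winv_eq, Wmagic_eq, gP, conj_Pyx, mul_assoc, WmWd, mul_one]; rfl
lemma AdW_Pyy : AdW (gP (1,1)) = mapRC2 KPyy := by
  show Wmagic * _ * Wmagic⁻¹ = _
  rw [Winv_eq, Wmagic_eq, gP, conj_Pyy, mul_assoc, WmWd, mul_one]; rfl
lemma AdW_Pyz : AdW (gP (1,2)) = mapRC2 KPyz := by
  show Wmagic * _ * Wmagic⁻¹ = _
  rw [Winv_eq, Wmagic_eq, gP, conj_Pyz, mul_assoc, WmWd, mul_one]; rfl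
lemma AdW_Pzx : AdW (gP (2,0)) = mapRC2 KPzx := by
  show Wmagic * _ * Wmagic⁻¹ = _
  rw [Winv_eq, Wmagic_eq, gP, conj_Pzx, mul_assoc, WmWd, mul_one]; rfl
lemma AdW_Pzy : AdW (gP (2,1)) = mapRC2 KPzy := by
  show Wmagic * _ * Wmagic⁻¹ = _
  rw [Winv_eq, Wmagic_eq, gP, conj_Pzy, mul_assoc, WmWd, mul_one]; rfl
lemma AdW_Pzz : AdW (gP (2,2)) = mapRC2 KPzz := by
  show Wmagic * _ * Wmagic⁻¹ = _
  rw [Winv_eq, Wmagic_eq, gP, conj_Pzz, mul_assoc, WmWd, mul_one]; rfl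

lemma KIx_skew : KIx ∈ skewSub := by
  show KIxᵀ = -KIx
  ext ⟨p1, p2⟩ ⟨q1, q2⟩
  fin_cases p1 <;> fin_cases p2 <;> fin_cases q1 <;> fin_cases q2 <;> norm_num [KIx]
lemma KIy_skew : KIy ∈ skewSub := by
  show KIyᵀ = -KIy
  ext ⟨p1, p2⟩ ⟨q1, q2⟩
  fin_cases p1 <;> fin_cases p2 <;> fin_cases q1 <;> fin_cases q2 <;> norm_num [KIy]
lemma KIz_skew : KIz ∈ skewSub := by
  show KIzᵀ = -KIz
  ext ⟨p1, p2⟩ ⟨q1, q2⟩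
  fin_cases p1 <;> fin_cases p2 <;> fin_cases q1 <;> fin_cases q2 <;> norm_num [KIz]
lemma KSx_skew : KSx ∈ skewSub := by
  show KSxᵀ = -KSx
  ext ⟨p1, p2⟩ ⟨q1, q2⟩
  fin_cases p1 <;> fin_cases p2 <;> fin_cases q1 <;> fin_cases q2 <;> norm_num [KSx]
lemma KSy_skew : KSy ∈ skewSub := by
  show KSyᵀ = -KSy
  ext ⟨p1, p2⟩ ⟨q1, q2⟩
  fin_cases p1 <;> fin_cases p2 <;> fin_cases q1 <;> fin_cases q2 <;> norm_num [KSy]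
lemma KSz_skew : KSz ∈ skewSub := by
  show KSzᵀ = -KSz
  ext ⟨p1, p2⟩ ⟨q1, q2⟩
  fin_cases p1 <;> fin_cases p2 <;> fin_cases q1 <;> fin_cases q2 <;> norm_num [KSz]

lemma trace_eq (A : M4R) :
    Matrix.trace A = A (0,0) (0,0) + A (0,1) (0,1) + A (1,0) (1,0) + A (1,1) (1,1) := by
  simp [Matrix.trace, Fintype.sum_prod_type, Fin.sum_univ_two, Matrix.diag]
  ring

lemma KP_sym : ∀ K ∈ [KPxx, KPxy, KPxz, KPyx, KPyy, KPyz, KPzx, KPzy, KPzz], K ∈ symSub := by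
  intro K hK
  fin_cases hK <;>
  · constructor
    · ext ⟨p1, p2⟩ ⟨q1, q2⟩
      fin_cases p1 <;> fin_cases p2 <;> fin_cases q1 <;> fin_cases q2 <;>
        norm_num [KPxx, KPxy, KPxz, KPyx, KPyy, KPyz, KPzx, KPzy, KPzz]
    · rw [trace_eq]
      norm_num [KPxx, KPxy, KPxz, KPyx, KPyy, KPyz, KPzx, KPzy, KPzz]

lemma skew_decomp (A : M4R) (h : Aᵀ = -A) :
    (A (1,0) (0,0) + A (1,1) (0,1)) • KIx + (A (0,1) (0,0) - A (1,1) (1,0)) • KIy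
      + (A (1,1) (0,0) - A (1,0) (0,1)) • KIz + (A (1,1) (0,1) - A (1,0) (0,0)) • KSx
      + (A (0,1) (0,0) + A (1,1) (1,0)) • KSy + (A (1,1) (0,0) + A (1,0) (0,1)) • KSz = A := by
  have ha : ∀ p q : Fin 2 × Fin 2, A p q = -A q p := fun p q => by
    have := congrFun (congrFun h q) p
    simpa using this
  ext ⟨p1, p2⟩ ⟨q1, q2⟩
  fin_cases p1 <;> fin_cases p2 <;> fin_cases q1 <;> fin_cases q2 <;>
    simp [KIx, KIy, KIz, KSx, KSy, KSz] <;>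
    linarith [ha ((0:Fin 2),(0:Fin 2)) ((0:Fin 2),(1:Fin 2)), ha ((0:Fin 2),(0:Fin 2)) ((1:Fin 2),(0:Fin 2)), ha ((0:Fin 2),(0:Fin 2)) ((1:Fin 2),(1:Fin 2)),
      ha ((0:Fin 2),(1:Fin 2)) ((1:Fin 2),(0:Fin 2)), ha ((0:Fin 2),(1:Fin 2)) ((1:Fin 2),(1:Fin 2)),
      ha ((1:Fin 2),(0:Fin 2)) ((1:Fin 2),(1:Fin 2)), ha ((0:Fin 2),(0:Fin 2)) ((0:Fin 2),(0:Fin 2)), ha ((0:Fin 2),(1:Fin 2)) ((0:Fin 2),(1:Fin 2)),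
      ha ((1:Fin 2),(0:Fin 2)) ((1:Fin 2),(0:Fin 2)), ha ((1:Fin 2),(1:Fin 2)) ((1:Fin 2),(1:Fin 2))]

lemma sym_decomp (A : M4R) (h : Aᵀ = A) (htr : Matrix.trace A = 0) :
    (-2*(A (0,0) (0,0) + A (1,0) (1,0))) • KPxx
      + (-2*A (1,1) (0,0) + 2*A (1,0) (0,1)) • KPxy
      + (2*A (0,1) (0,0) + 2*A (1,1) (1,0)) • KPxz
      + (-2*A (1,1) (0,0) - 2*A (1,0) (0,1)) • KPyx
      + (2*(A (0,0) (0,0) + A (0,1) (0,1))) • KPyy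
      + (2*A (1,1) (0,1) - 2*A (1,0) (0,0)) • KPyz
      + (2*A (0,1) (0,0) - 2*A (1,1) (1,0)) • KPzx
      + (2*A (1,0) (0,0) + 2*A (1,1) (0,1)) • KPzy
      + (-2*(A (0,1) (0,1) + A (1,0) (1,0))) • KPzz = A := by
  have ha : ∀ p q : Fin 2 × Fin 2, A p q = A q p := fun p q => by
    have := congrFun (congrFun h q) p
    simpa using this
  rw [trace_eq] at htr
  simp only [show ((0:Fin 2),(0:Fin 2)) = (0 : Fin 2 × Fin 2) from rfl,
    show ((1:Fin 2),(1:Fin 2)) = (1 : Fin 2 × Fin 2) from rfl] at htr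
  ext ⟨p1, p2⟩ ⟨q1, q2⟩
  fin_cases p1 <;> fin_cases p2 <;> fin_cases q1 <;> fin_cases q2 <;>
    simp [KPxx, KPxy, KPxz, KPyx, KPyy, KPyz, KPzx, KPzy, KPzz] <;>
    linarith [ha ((0:Fin 2),(0:Fin 2)) ((0:Fin 2),(1:Fin 2)), ha ((0:Fin 2),(0:Fin 2)) ((1:Fin 2),(0:Fin 2)), ha ((0:Fin 2),(0:Fin 2)) ((1:Fin 2),(1:Fin 2)),
      ha ((0:Fin 2),(1:Fin 2)) ((1:Fin 2),(0:Fin 2)), ha ((0:Fin 2),(1:Fin 2)) ((1:Fin 2),(1:Fin 2)),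
      ha ((1:Fin 2),(0:Fin 2)) ((1:Fin 2),(1:Fin 2)), (show A ((0:Fin 2),(0:Fin 2)) ((0:Fin 2),(0:Fin 2)) + A ((0:Fin 2),(1:Fin 2)) ((0:Fin 2),(1:Fin 2))
        + A ((1:Fin 2),(0:Fin 2)) ((1:Fin 2),(0:Fin 2)) + A ((1:Fin 2),(1:Fin 2)) ((1:Fin 2),(1:Fin 2)) = 0 from htr)]

end Aux2

/-- conjugation by `W` maps `𝔨` onto `so(4)` (real skew-symmetric matrices viewed
inside `su(4)`) and maps `𝔭` onto `{-iA : A real traceless symmetric}`. -/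
theorem magic_basis_conjugation :
    ((fun X => Wmagic * X * Wmagic⁻¹) '' (localAlg : Set (Matrix (Fin 2 × Fin 2) (Fin 2 × Fin 2) ℂ)) =
      {X | ∃ A : Matrix (Fin 2 × Fin 2) (Fin 2 × Fin 2) ℝ, Aᵀ = -A ∧ X = A.map Complex.ofReal}) ∧
    ((fun X => Wmagic * X * Wmagic⁻¹) '' (nonlocalAlg : Set (Matrix (Fin 2 × Fin 2) (Fin 2 × Fin 2) ℂ)) =
      {X | ∃ A : Matrix (Fin 2 × Fin 2) (Fin 2 × Fin 2) ℝ, Aᵀ = A ∧ Matrix.trace A = 0 ∧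
        X = (-Complex.I) • A.map Complex.ofReal}) := by
  constructor
  · apply Set.Subset.antisymm
    · rintro X ⟨Y, hY, rfl⟩
      have hle : localAlg ≤ Submodule.comap AdW (Submodule.map mapRC skewSub) := by
        rw [localAlg, Submodule.span_le]
        rintro g (⟨α, rfl⟩ | ⟨β, rfl⟩)
        · fin_cases α
          · exact Submodule.mem_comap.2 (AdW_Ix ▸ Submodule.mem_map_of_mem KIx_skew)
          · exact Submodule.mem_comap.2 (AdW_Iy ▸ Submodule.mem_map_of_mem KIy_skew)
          · exact Submodule.mem_comap.2 (AdW_Iz ▸ Submodule.mem_map_of_mem KIz_skew)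
        · fin_cases β
          · exact Submodule.mem_comap.2 (AdW_Sx ▸ Submodule.mem_map_of_mem KSx_skew)
          · exact Submodule.mem_comap.2 (AdW_Sy ▸ Submodule.mem_map_of_mem KSy_skew)
          · exact Submodule.mem_comap.2 (AdW_Sz ▸ Submodule.mem_map_of_mem KSz_skew)
      obtain ⟨A, hA, hAe⟩ := Submodule.mem_map.1 (hle hY)
      exact ⟨A, hA, hAe.symm⟩
    · rintro X ⟨A, hA, rfl⟩
      have hg : ∀ α : Fin 3, gI α ∈ localAlg := fun α =>
        Submodule.subset_span (Set.mem_union_left _ ⟨α, rfl⟩)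
      have hs : ∀ β : Fin 3, gS β ∈ localAlg := fun β =>
        Submodule.subset_span (Set.mem_union_right _ ⟨β, rfl⟩)
      refine ⟨(A (1,0) (0,0) + A (1,1) (0,1)) • gI 0 + (A (0,1) (0,0) - A (1,1) (1,0)) • gI 1
        + (A (1,1) (0,0) - A (1,0) (0,1)) • gI 2 + (A (1,1) (0,1) - A (1,0) (0,0)) • gS 0
        + (A (0,1) (0,0) + A (1,1) (1,0)) • gS 1 + (A (1,1) (0,0) + A (1,0) (0,1)) • gS 2,
        ?_, ?_⟩
      · exact add_mem (add_mem (add_mem (add_mem (add_mem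
          (Submodule.smul_mem _ _ (hg 0)) (Submodule.smul_mem _ _ (hg 1)))
          (Submodule.smul_mem _ _ (hg 2))) (Submodule.smul_mem _ _ (hs 0)))
          (Submodule.smul_mem _ _ (hs 1))) (Submodule.smul_mem _ _ (hs 2))
      · show AdW _ = _
        have hd := congrArg mapRC (skew_decomp A hA)
        simp only [map_add, LinearMap.map_smul] at hd ⊢
        rw [AdW_Ix, AdW_Iy, AdW_Iz, AdW_Sx, AdW_Sy, AdW_Sz]
        exact hd
  · apply Set.Subset.antisymm
    · rintro X ⟨Y, hY, rfl⟩
      have hle : nonlocalAlg ≤ Submodule.comap AdW (Submodule.map mapRC2 symSub) := by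
        rw [nonlocalAlg, Submodule.span_le]
        rintro g ⟨⟨a, b⟩, rfl⟩
        fin_cases a <;> fin_cases b
        · exact Submodule.mem_comap.2 (AdW_Pxx ▸ Submodule.mem_map_of_mem (KP_sym _ (by simp)))
        · exact Submodule.mem_comap.2 (AdW_Pxy ▸ Submodule.mem_map_of_mem (KP_sym _ (by simp)))
        · exact Submodule.mem_comap.2 (AdW_Pxz ▸ Submodule.mem_map_of_mem (KP_sym _ (by simp)))
        · exact Submodule.mem_comap.2 (AdW_Pyx ▸ Submodule.mem_map_of_mem (KP_sym _ (by simp)))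
        · exact Submodule.mem_comap.2 (AdW_Pyy ▸ Submodule.mem_map_of_mem (KP_sym _ (by simp)))
        · exact Submodule.mem_comap.2 (AdW_Pyz ▸ Submodule.mem_map_of_mem (KP_sym _ (by simp)))
        · exact Submodule.mem_comap.2 (AdW_Pzx ▸ Submodule.mem_map_of_mem (KP_sym _ (by simp)))
        · exact Submodule.mem_comap.2 (AdW_Pzy ▸ Submodule.mem_map_of_mem (KP_sym _ (by simp)))
        · exact Submodule.mem_comap.2 (AdW_Pzz ▸ Submodule.mem_map_of_mem (KP_sym _ (by simp)))
      obtain ⟨A, hA, hAe⟩ := Submodule.mem_map.1 (hle hY)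
      exact ⟨A, hA.1, hA.2, hAe.symm⟩
    · rintro X ⟨A, hA1, hA2, rfl⟩
      have hp : ∀ p : Fin 3 × Fin 3, gP p ∈ nonlocalAlg := fun p =>
        Submodule.subset_span ⟨p, rfl⟩
      refine ⟨(-2*(A (0,0) (0,0) + A (1,0) (1,0))) • gP (0,0)
        + (-2*A (1,1) (0,0) + 2*A (1,0) (0,1)) • gP (0,1)
        + (2*A (0,1) (0,0) + 2*A (1,1) (1,0)) • gP (0,2)
        + (-2*A (1,1) (0,0) - 2*A (1,0) (0,1)) • gP (1,0)
        + (2*(A (0,0) (0,0) + A (0,1) (0,1))) • gP (1,1)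
        + (2*A (1,1) (0,1) - 2*A (1,0) (0,0)) • gP (1,2)
        + (2*A (0,1) (0,0) - 2*A (1,1) (1,0)) • gP (2,0)
        + (2*A (1,0) (0,0) + 2*A (1,1) (0,1)) • gP (2,1)
        + (-2*(A (0,1) (0,1) + A (1,0) (1,0))) • gP (2,2), ?_, ?_⟩
      · exact add_mem (add_mem (add_mem (add_mem (add_mem (add_mem (add_mem (add_mem
          (Submodule.smul_mem _ _ (hp (0,0))) (Submodule.smul_mem _ _ (hp (0,1))))
          (Submodule.smul_mem _ _ (hp (0,2)))) (Submodule.smul_mem _ _ (hp (1,0))))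
          (Submodule.smul_mem _ _ (hp (1,1)))) (Submodule.smul_mem _ _ (hp (1,2))))
          (Submodule.smul_mem _ _ (hp (2,0)))) (Submodule.smul_mem _ _ (hp (2,1))))
          (Submodule.smul_mem _ _ (hp (2,2)))
      · show AdW _ = _
        have hd := congrArg mapRC2 (sym_decomp A hA1 hA2)
        simp only [map_add, LinearMap.map_smul] at hd ⊢
        rw [AdW_Pxx, AdW_Pxy, AdW_Pxz, AdW_Pyx, AdW_Pyy, AdW_Pyz, AdW_Pzx, AdW_Pzy, AdW_Pzz]
        exact hd
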